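/- In a minimum-weight arborescence T converging to the root r of a weighted extended graph G† (original edges weight 0, inverse edges weight 1), suppose (p, q) is an inverse edge of T with q ≠ r and q not a sink, and let (q, q') be the unique edge of T leaving q. If the weight-0 edge (p, q') exists in G†, then q' ≠ p. Moreover, if (p, q') ∈ E has weight 0, then replacing (p, q) by (p, q') yields an arborescence of strictly smaller weight; hence no minimum-weight arborescence contains an inverse edge (p, q) such that (p, q') is a weight-0 edge, where q' is the successor of q in T. -/

import Mathlib

/-- The extended graph of a directed graph `E` with sink set `S`:
vertices are `Option V`, with the fresh root `none`. -/
def ExtG {V : Type*} (E : V → V → Prop) (S : Set V) : Option V → Option V → Prop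
  | some p, some q => E p q ∨ (E q p ∧ ¬ E p q)
  | some s, none => s ∈ S
  | none, _ => False

/-- Weights in the extended graph: original edges of `E` and sink-to-root
edges have weight 0, inverse edges have weight 1. -/
def extW {V : Type*} (E : V → V → Prop) [DecidableRel E] : V → Option V → ℕ
  | p, some q => if E p q then 0 else 1
  | _, none => 0

/-- One step along the parent function `f`, the root `none` is absorbing. -/
def ostep {V : Type*} (f : V → Option V) : Option V → Option V
  | some v => f v
  | none => none

/-- Spanning arborescence converging to the root `none`. -/
def IsArb {V : Type*} (G : Option V → Option V → Prop) (f : V → Option V) : Prop :=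
  (∀ v, G (some v) (f v)) ∧ ∀ v, ∃ n : ℕ, (ostep f)^[n] (some v) = none

/-- Total weight of an arborescence. -/
def arbWeight {V : Type*} [Fintype V] (w : V → Option V → ℕ) (f : V → Option V) : ℕ :=
  ∑ v : V, w v (f v)

/-- Minimum-weight spanning arborescence converging to the root. -/
def IsMinArb {V : Type*} [Fintype V] (G : Option V → Option V → Prop)
    (w : V → Option V → ℕ) (f : V → Option V) : Prop :=
  IsArb G f ∧ ∀ g : V → Option V, IsArb G g → arbWeight w f ≤ arbWeight w g

lemma none_absorb {V : Type*} (f : V → Option V) (n : ℕ) :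
    (ostep f)^[n] none = none := by
  induction n with
  | zero => rfl
  | succ n ih => rw [Function.iterate_succ_apply]; exact ih

lemma no_revisit {V : Type*} (f : V → Option V) (p : V) (n k : ℕ)
    (hn : (ostep f)^[n] (some p) = none) (hk : (ostep f)^[k] (some p) = some p)
    (hk1 : 1 ≤ k) : False := by
  have hmul : ∀ m, (ostep f)^[m * k] (some p) = some p := by
    intro m
    induction m with
    | zero => simp
    | succ m ih => rw [Nat.succ_mul, Function.iterate_add_apply, hk, ih]
  have hge : n ≤ n * k := Nat.le_mul_of_pos_right n hk1
  have : (ostep f)^[n * k] (some p) = none := by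
    rw [← Nat.sub_add_cancel hge, Function.iterate_add_apply, hn, none_absorb]
  rw [hmul n] at this
  exact Option.some_ne_none _ this

/-- No minimum-weight arborescence of the extended graph contains an inverse
edge `(p, q)` with non-sink head `q` such that the weight-0 edge `(p, q')`
exists, where `(q, q')` is the unique edge of the arborescence leaving `q`.
(In particular the replacement of `(p, q)` by `(p, q')` would give a strictly
lighter arborescence.) -/
theorem stmt2 {V : Type*} [Fintype V] (E : V → V → Prop) [DecidableRel E] (S : Set V)
    (f : V → Option V) (hmin : IsMinArb (ExtG E S) (extW E) f)
    (p q q' : V)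
    (he : f p = some q)
    (hinv : E q p ∧ ¬ E p q)
    (hqS : q ∉ S)
    (hq' : f q = some q')
    (hpq' : E p q') : False := by
  classical
  obtain ⟨⟨hedge, hreach⟩, hopt⟩ := hmin
  set g : V → Option V := fun v => if v = p then some q' else f v with hg
  obtain ⟨N, hN⟩ := hreach p
  -- the f-path from q' is two steps along the f-path from p
  have hshift : ∀ k, (ostep f)^[k] (some q') = (ostep f)^[k + 2] (some p) := by
    intro k
    have : (ostep f)^[2] (some p) = some q' := by
      simp [Function.iterate_succ_apply, ostep, he, hq']
    rw [Function.iterate_add_apply, this]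
  -- the f-path from q' never meets p, so it coincides with the g-path
  have hgq' : ∀ k, (ostep g)^[k] (some q') = (ostep f)^[k] (some q') := by
    intro k
    induction k with
    | zero => rfl
    | succ k ih =>
      rw [Function.iterate_succ_apply', Function.iterate_succ_apply', ih]
      cases hx : (ostep f)^[k] (some q') with
      | none => rfl
      | some v =>
        have hvp : v ≠ p := by
          intro hvp
          subst hvp
          exact no_revisit f v N (k + 2) hN (by rw [← hshift k, hx]) (by omega)
        simp [ostep, hg, hvp]
  -- p reaches the root under g
  have hgp : ∃ m, (ostep g)^[m] (some p) = none := by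
    have h2 : 2 ≤ N := by
      rcases N with _ | _ | N
      · exact absurd hN (by simp)
      · exact absurd hN (by simp [Function.iterate_succ_apply, ostep, he])
      · omega
    refine ⟨N - 1, ?_⟩
    have : (ostep g)^[N - 1] (some p) = (ostep g)^[N - 2] (some q') := by
      have : N - 1 = (N - 2) + 1 := by omega
      rw [this, Function.iterate_succ_apply]
      congr 1
      simp [ostep, hg]
    rw [this, hgq', hshift]
    have : N - 2 + 2 = N := by omega
    rw [this, hN]
  -- every vertex reaches the root under g
  have hgarb : IsArb (ExtG E S) g := by
    constructor
    · intro v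
      by_cases hv : v = p
      · subst hv; simpa [hg, ExtG] using Or.inl hpq'
      · simpa [hg, hv] using hedge v
    · intro v
      obtain ⟨n, hn⟩ := hreach v
      clear hN hgq' hshift
      induction n generalizing v with
      | zero => exact absurd hn (by simp)
      | succ n ih =>
        by_cases hv : v = p
        · subst hv; exact hgp
        · rw [Function.iterate_succ_apply] at hn
          have hstep : ostep g (some v) = ostep f (some v) := by simp [ostep, hg, hv]
          cases hx : ostep f (some v) with
          | none =>
            exact ⟨1, by simp [Function.iterate_succ_apply, hstep, hx, none_absorb]⟩
          | some u =>
            rw [hx] at hn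
            obtain ⟨m, hm⟩ := ih u hn
            exact ⟨m + 1, by rw [Function.iterate_succ_apply, hstep, hx, hm]⟩
  -- the swap strictly decreases the weight: contradiction with minimality
  have hle := hopt g hgarb
  have hlt : arbWeight (extW E) g < arbWeight (extW E) f := by
    unfold arbWeight
    have hsplit : ∀ h : V → Option V,
        ∑ v : V, extW E v (h v)
          = extW E p (h p) + ∑ v ∈ Finset.univ.erase p, extW E v (h v) := by
      intro h
      rw [← Finset.add_sum_erase _ _ (Finset.mem_univ p)]
    rw [hsplit f, hsplit g]
    have heq : ∑ v ∈ Finset.univ.erase p, extW E v (g v)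
        = ∑ v ∈ Finset.univ.erase p, extW E v (f v) := by
      refine Finset.sum_congr rfl fun v hv => ?_
      have : v ≠ p := (Finset.mem_erase.mp hv).1
      simp [hg, this]
    rw [heq]
    have h1 : extW E p (f p) = 1 := by simp [he, extW, hinv.2]
    have h2 : extW E p (g p) = 0 := by simp [hg, extW, hpq']
    omega
  omega
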